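/- Let X be a locally finite tree (a connected, acyclic, locally finite simple graph) and fix a vertex x₀. For a subgroup Γ ≤ Aut(X) define g_Γ(k) = the number of Γ-orbits O of vertices with min_{v∈O} d(v,x₀) ≤ k (this is the number of vertices of the quotient graph Γ\X in the combinatorial ball of radius k about the image of x₀). If Γ and Γ' are lattices in Aut(X) (discrete subgroups of finite covolume) that are commensurable in Aut(X), then g_Γ ≃ g_{Γ'}. -/

import Mathlib

open SimpleGraph MulAction
open scoped ENNReal

universe u

variable {V : Type u}

/-- The automorphism group of a simple graph, as a subgroup of the permutation group
of its vertex set. -/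
def SimpleGraph.autGroup (G : SimpleGraph V) : Subgroup (Equiv.Perm V) where
  carrier := {f | ∀ u v : V, G.Adj (f u) (f v) ↔ G.Adj u v}
  one_mem' := by intro u v; simp
  mul_mem' := by
    intro a b ha hb u v
    simp only [Set.mem_setOf_eq, Equiv.Perm.mul_apply] at *
    rw [ha, hb]
  inv_mem' := by
    intro a ha u v
    simpa using (ha (a⁻¹ u) (a⁻¹ v)).symm

/-- A subgroup of the permutation group of the vertices is discrete if all vertex
stabilizers are finite. -/
def IsDiscreteSubgroup (Γ : Subgroup (Equiv.Perm V)) : Prop :=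
  ∀ v : V, Finite (stabilizer Γ v)

/-- The `S`-covolume of a subgroup `Γ` of the permutation group of the vertices:
the sum of `1 / |Γ_v|` over the `Γ`-orbits meeting `S` (for `Γ`-invariant `S`, the
orbits contained in `S`), where `v` is a representative of the orbit. -/
noncomputable def covolume (Γ : Subgroup (Equiv.Perm V)) (S : Set V) : ℝ≥0∞ :=
  ∑' O : {O : Quotient (orbitRel Γ V) // Quotient.out O ∈ S},
    ((Nat.card (stabilizer Γ (Quotient.out (O : Quotient (orbitRel Γ V))))) : ℝ≥0∞)⁻¹

/-- A lattice: a discrete subgroup with finite covolume with respect to the set of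
all vertices. -/
def IsGraphLattice (Γ : Subgroup (Equiv.Perm V)) : Prop :=
  IsDiscreteSubgroup Γ ∧ covolume Γ Set.univ ≠ ⊤

/-- A nonuniform lattice: a lattice with infinitely many orbits of vertices. -/
def IsNonuniformLattice (Γ : Subgroup (Equiv.Perm V)) : Prop :=
  IsGraphLattice Γ ∧ Infinite (Quotient (orbitRel Γ V))

/-- `f ⪯ g` : there are `a, b` with `f k ≤ a * g (k + b)` for all `k`. -/
def GrowthLE (f g : ℕ → ℕ) : Prop :=
  ∃ a b : ℕ, ∀ k : ℕ, f k ≤ a * g (k + b)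

/-- Equivalence of growth types. -/
def GrowthEquiv (f g : ℕ → ℕ) : Prop :=
  GrowthLE f g ∧ GrowthLE g f

/-- The number of `Γ`-orbits of vertices meeting the ball of radius `k` about `x₀`. -/
noncomputable def quotientGrowth (G : SimpleGraph V) (Γ : Subgroup (Equiv.Perm V))
    (x₀ : V) (k : ℕ) : ℕ :=
  Nat.card {O : Quotient (orbitRel Γ V) //
    ∃ v : V, Quotient.mk (orbitRel Γ V) v = O ∧ G.dist v x₀ ≤ k}

/-- The maximal order of a `Γ`-stabilizer of a vertex in the ball of radius `k`
about `x₀`. -/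
noncomputable def stabilizerGrowth (G : SimpleGraph V) (Γ : Subgroup (Equiv.Perm V))
    (x₀ : V) (k : ℕ) : ℕ :=
  sSup {c : ℕ | ∃ v : V, G.dist v x₀ ≤ k ∧ c = Nat.card (stabilizer Γ v)}

/-- The `p`-order of a (finite) group order `k` : the largest power of `p` dividing `k`. -/
def pOrder (p k : ℕ) : ℕ := p ^ (k.factorization p)

/-- The maximal `p`-order of a `Γ`-stabilizer of a vertex in the ball of radius `k`
about `x₀`. -/
noncomputable def pStabilizerGrowth (G : SimpleGraph V) (Γ : Subgroup (Equiv.Perm V))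
    (p : ℕ) (x₀ : V) (k : ℕ) : ℕ :=
  sSup {c : ℕ | ∃ v : V, G.dist v x₀ ≤ k ∧ c = pOrder p (Nat.card (stabilizer Γ v))}

/-- `Γ` and `Γ'` are commensurable in (a subgroup) `A` of the permutation group:
some `A`-conjugate of `Γ` intersects `Γ'` in finite index in both. -/
def CommensurableIn {GG : Type u} [Group GG] (A Γ Γ' : Subgroup GG) : Prop :=
  ∃ g ∈ A, Subgroup.Commensurable (Subgroup.map (MulAut.conj g).toMonoidHom Γ) Γ'

/-- An `(m,n)`-biregular tree with parts `V₀`, `V₁`. -/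
structure IsBiregularTree (G : SimpleGraph V) (V₀ V₁ : Set V) (m n : ℕ) : Prop where
  connected : G.Connected
  acyclic : G.IsAcyclic
  disjoint : Disjoint V₀ V₁
  union : V₀ ∪ V₁ = Set.univ
  adj_parts : ∀ ⦃u v : V⦄, G.Adj u v → (u ∈ V₀ ∧ v ∈ V₁) ∨ (u ∈ V₁ ∧ v ∈ V₀)
  degree₀ : ∀ v ∈ V₀, (G.neighborSet v).Finite ∧ (G.neighborSet v).ncard = m
  degree₁ : ∀ v ∈ V₁, (G.neighborSet v).Finite ∧ (G.neighborSet v).ncard = n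

/-- A star tree of degree `m` with parts `V₀`, `V₁`. -/
structure IsStarTree (A : SimpleGraph V) (V₀ V₁ : Set V) (m : ℕ) : Prop where
  connected : A.Connected
  acyclic : A.IsAcyclic
  disjoint : Disjoint V₀ V₁
  union : V₀ ∪ V₁ = Set.univ
  adj_parts : ∀ ⦃u v : V⦄, A.Adj u v → (u ∈ V₀ ∧ v ∈ V₁) ∨ (u ∈ V₁ ∧ v ∈ V₀)
  degree₀ : ∀ v ∈ V₀, (A.neighborSet v).Finite ∧ (A.neighborSet v).ncard = m
  degree₁ : ∀ v ∈ V₁, (A.neighborSet v).Finite ∧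
    ((A.neighborSet v).ncard = 1 ∨ (A.neighborSet v).ncard = 2)

/-- The quotient graph `Γ\X`: vertices are `Γ`-orbits; two distinct orbits are
adjacent iff some vertex of one is adjacent to some vertex of the other. -/
def quotientGraph (G : SimpleGraph V) (Γ : Subgroup (Equiv.Perm V)) :
    SimpleGraph (Quotient (orbitRel Γ V)) where
  Adj O O' := O ≠ O' ∧ ∃ u v : V, Quotient.mk (orbitRel Γ V) u = O ∧
    Quotient.mk (orbitRel Γ V) v = O' ∧ G.Adj u v
  symm := ⟨by
    rintro O O' ⟨hne, u, v, hu, hv, huv⟩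
    exact ⟨hne.symm, v, u, hv, hu, huv.symm⟩⟩
  loopless := ⟨fun O h => h.1 rfl⟩

/-- An acceptable quotient growth function. -/
structure AcceptableGrowth (f : ℕ → ℕ) : Prop where
  base : f 0 = 1
  one_le : ∀ j : ℕ, 1 ≤ f (j + 1)
  le_two_mul : ∀ j : ℕ, f (j + 1) ≤ 2 * f j
  summable : Summable fun j : ℕ => (f j : ℝ) / 2 ^ j

/-- An `n`-admissible sequence `s`, indexed by `k ≥ 1`. -/
def NAdmissible (n : ℕ) (s : ℕ → ℕ) : Prop :=
  ∀ k : ℕ, 1 ≤ k → s k ∣ n ∧ 2 < s k ∧ s k ≤ n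

/-- The associated function `h j = (s 1 - 1) * ⋯ * (s j - 1)`, with `h 0 = 1`. -/
def admProd (s : ℕ → ℕ) (j : ℕ) : ℕ := ∏ i ∈ Finset.Icc 1 j, (s i - 1)


section Aux

variable {V : Type u}

/-- Graph automorphisms preserve distance (one inequality). -/
lemma aut_dist_le (G : SimpleGraph V) (hconn : G.Connected)
    (f : Equiv.Perm V) (hf : f ∈ G.autGroup) (u v : V) :
    G.dist (f u) (f v) ≤ G.dist u v := by
  obtain ⟨p, hp⟩ := hconn.exists_walk_length_eq_dist u v
  let φ : G ≃g G := ⟨f, by intro a b; exact hf a b⟩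
  calc G.dist (f u) (f v) ≤ (p.map φ.toHom).length := SimpleGraph.dist_le _
    _ = p.length := SimpleGraph.Walk.length_map _ _
    _ = G.dist u v := hp

/-- Graph automorphisms preserve distance. -/
lemma aut_dist (G : SimpleGraph V) (hconn : G.Connected)
    (f : Equiv.Perm V) (hf : f ∈ G.autGroup) (u v : V) :
    G.dist (f u) (f v) = G.dist u v := by
  refine le_antisymm (aut_dist_le G hconn f hf u v) ?_
  have h2 := aut_dist_le G hconn f⁻¹ (G.autGroup.inv_mem hf) (f u) (f v)
  simpa using h2

/-- Balls in a connected locally finite graph are finite. -/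
lemma ball_finite (G : SimpleGraph V) (hconn : G.Connected)
    (hlf : ∀ v : V, (G.neighborSet v).Finite) (x₀ : V) :
    ∀ k : ℕ, {v : V | G.dist v x₀ ≤ k}.Finite := by
  intro k
  induction k with
  | zero =>
    apply Set.Finite.subset (Set.finite_singleton x₀)
    intro v hv
    simp only [Set.mem_setOf_eq, Nat.le_zero] at hv
    exact hconn.dist_eq_zero_iff.mp hv
  | succ k ih =>
    apply Set.Finite.subset
      (Set.Finite.union (Set.finite_singleton x₀)
        (Set.Finite.biUnion ih (fun u _ => hlf u)))
    intro v hv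
    simp only [Set.mem_setOf_eq] at hv
    by_cases hvx : v = x₀
    · exact Or.inl (by simp [hvx])
    · obtain ⟨p, hp⟩ := hconn.exists_walk_length_eq_dist v x₀
      cases p with
      | nil => exact absurd rfl hvx
      | @cons _ u _ h q =>
        right
        refine Set.mem_biUnion (show G.dist u x₀ ≤ k from ?_) h.symm
        have hlen : q.length + 1 = G.dist v x₀ := by simpa using hp
        have hq : q.length ≤ k := by omega
        exact le_trans (SimpleGraph.dist_le q) hq

/-- The set of orbits meeting a ball is finite. -/
lemma growthSet_finite (G : SimpleGraph V) (hconn : G.Connected)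
    (hlf : ∀ v : V, (G.neighborSet v).Finite) (Γ : Subgroup (Equiv.Perm V)) (x₀ : V) (k : ℕ) :
    Finite {O : Quotient (orbitRel Γ V) //
      ∃ v : V, Quotient.mk (orbitRel Γ V) v = O ∧ G.dist v x₀ ≤ k} := by
  have hb : Finite {v : V // G.dist v x₀ ≤ k} :=
    (ball_finite G hconn hlf x₀ k).to_subtype
  refine Finite.of_surjective
    (fun v : {v : V // G.dist v x₀ ≤ k} =>
      (⟨Quotient.mk (orbitRel Γ V) v.1, v.1, rfl, v.2⟩ :
        {O : Quotient (orbitRel Γ V) //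
          ∃ v : V, Quotient.mk (orbitRel Γ V) v = O ∧ G.dist v x₀ ≤ k})) ?_
  rintro ⟨O, v, hv, hd⟩
  exact ⟨⟨v, hd⟩, Subtype.ext hv⟩

/-- The natural map on orbit spaces induced by a subgroup inclusion. -/
def orbMap {Γ₁ Γ₂ : Subgroup (Equiv.Perm V)} (h : Γ₁ ≤ Γ₂) :
    Quotient (orbitRel Γ₁ V) → Quotient (orbitRel Γ₂ V) :=
  Quotient.map id (by
    rintro a b ⟨γ, hγ⟩
    exact ⟨⟨γ.1, h γ.2⟩, hγ⟩)

lemma orbMap_mk {Γ₁ Γ₂ : Subgroup (Equiv.Perm V)} (h : Γ₁ ≤ Γ₂) (v : V) :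
    orbMap h (Quotient.mk (orbitRel Γ₁ V) v) = Quotient.mk (orbitRel Γ₂ V) v := rfl

/-- Changing basepoint shifts growth. -/
lemma qg_basepoint (G : SimpleGraph V) (hconn : G.Connected)
    (hlf : ∀ v : V, (G.neighborSet v).Finite) (Γ : Subgroup (Equiv.Perm V))
    (x₀ x₁ : V) (k : ℕ) :
    quotientGrowth G Γ x₁ k ≤ quotientGrowth G Γ x₀ (k + G.dist x₁ x₀) := by
  haveI := growthSet_finite G hconn hlf Γ x₀ (k + G.dist x₁ x₀)
  apply Nat.card_le_card_of_injective
    (fun p : {O : Quotient (orbitRel Γ V) //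
        ∃ v : V, Quotient.mk (orbitRel Γ V) v = O ∧ G.dist v x₁ ≤ k} =>
      (⟨p.1, by
        obtain ⟨v, hv, hd⟩ := p.2
        exact ⟨v, hv, le_trans (hconn.dist_triangle (v := x₁))
          (Nat.add_le_add_right hd _)⟩⟩ :
        {O : Quotient (orbitRel Γ V) //
          ∃ v : V, Quotient.mk (orbitRel Γ V) v = O ∧ G.dist v x₀ ≤ k + G.dist x₁ x₀}))
  intro p q h
  exact Subtype.ext (congrArg Subtype.val h :)

/-- Growth of a larger group is at most growth of a subgroup. -/
lemma qg_le_of_le (G : SimpleGraph V) (hconn : G.Connected)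
    (hlf : ∀ v : V, (G.neighborSet v).Finite) {Γ₁ Γ₂ : Subgroup (Equiv.Perm V)}
    (h : Γ₁ ≤ Γ₂) (x₀ : V) (k : ℕ) :
    quotientGrowth G Γ₂ x₀ k ≤ quotientGrowth G Γ₁ x₀ k := by
  haveI := growthSet_finite G hconn hlf Γ₁ x₀ k
  set π : Quotient (orbitRel Γ₁ V) → Quotient (orbitRel Γ₂ V) := orbMap h with hπ
  have hπmk : ∀ v : V, π (Quotient.mk (orbitRel Γ₁ V) v) = Quotient.mk (orbitRel Γ₂ V) v :=
    fun v => rfl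
  apply Nat.card_le_card_of_surjective
    (fun p : {O : Quotient (orbitRel Γ₁ V) //
        ∃ v : V, Quotient.mk (orbitRel Γ₁ V) v = O ∧ G.dist v x₀ ≤ k} =>
      (⟨π p.1, by
        obtain ⟨v, hv, hd⟩ := p.2
        exact ⟨v, by rw [← hv]; exact hπmk v, hd⟩⟩ :
        {O : Quotient (orbitRel Γ₂ V) //
          ∃ v : V, Quotient.mk (orbitRel Γ₂ V) v = O ∧ G.dist v x₀ ≤ k}))
  rintro ⟨O, v, hv, hd⟩
  refine ⟨⟨Quotient.mk (orbitRel Γ₁ V) v, v, rfl, hd⟩, Subtype.ext ?_⟩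
  simpa [hπmk v] using hv

/-- Fiber-counting bound for cardinalities. -/
lemma card_le_mul_of_fiber {A : Type*} {B : Type*} [Finite A] [Finite B]
    (f : A → B) (n : ℕ) (hf : ∀ b : B, Nat.card {a : A // f a = b} ≤ n) :
    Nat.card A ≤ n * Nat.card B := by
  classical
  haveI := Fintype.ofFinite A
  haveI := Fintype.ofFinite B
  rw [Nat.card_eq_fintype_card, Nat.card_eq_fintype_card]
  calc Fintype.card A
      = Fintype.card ((b : B) × {a : A // f a = b}) :=
        (Fintype.card_congr (Equiv.sigmaFiberEquiv f)).symm
    _ = ∑ b : B, Fintype.card {a : A // f a = b} := Fintype.card_sigma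
    _ ≤ ∑ _b : B, n := Finset.sum_le_sum (fun b _ => by
        simpa [Nat.card_eq_fintype_card] using hf b)
    _ = n * Fintype.card B := by rw [Finset.sum_const, smul_eq_mul, Nat.mul_comm]; rfl

/-- Each Γ₂-orbit contains at most `relindex` many Γ₁-orbits. -/
lemma fiber_card_le (G : SimpleGraph V) {Γ₁ Γ₂ : Subgroup (Equiv.Perm V)}
    (h : Γ₁ ≤ Γ₂) (hfi : Γ₁.relIndex Γ₂ ≠ 0) (O₂ : Quotient (orbitRel Γ₂ V)) :
    Finite {O₁ : Quotient (orbitRel Γ₁ V) // orbMap h O₁ = O₂} ∧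
    Nat.card {O₁ : Quotient (orbitRel Γ₁ V) // orbMap h O₁ = O₂} ≤ Γ₁.relIndex Γ₂ := by
  set π : Quotient (orbitRel Γ₁ V) → Quotient (orbitRel Γ₂ V) := orbMap h with hπ
  haveI : Finite (Γ₂ ⧸ Γ₁.subgroupOf Γ₂) :=
    Nat.finite_of_card_ne_zero hfi
  set w : V := Quotient.out O₂ with hw
  have hwO : Quotient.mk (orbitRel Γ₂ V) w = O₂ := Quotient.out_eq O₂
  -- the surjection from cosets onto the fiber
  have hsurj : Function.Surjective
      (fun q : Γ₂ ⧸ Γ₁.subgroupOf Γ₂ =>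
        (Quotient.liftOn' q
          (fun γ : Γ₂ =>
            (⟨Quotient.mk (orbitRel Γ₁ V) ((γ : Equiv.Perm V)⁻¹ w), by
              show π _ = O₂
              rw [← hwO]
              apply Quotient.sound
              apply (MulAction.orbitRel_apply (G := Γ₂)).mpr
              exact ⟨γ⁻¹, rfl⟩⟩ :
            {O₁ : Quotient (orbitRel Γ₁ V) // π O₁ = O₂}))
          (by
            intro a b hab
            rw [QuotientGroup.leftRel_apply] at hab
            apply Subtype.ext
            show Quotient.mk (orbitRel Γ₁ V) _ = Quotient.mk (orbitRel Γ₁ V) _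
            apply Quotient.sound
            apply (MulAction.orbitRel_apply (G := Γ₁)).mpr
            refine ⟨⟨((a⁻¹ * b : Γ₂) : Equiv.Perm V), hab⟩, ?_⟩
            show ((a⁻¹ * b : Γ₂) : Equiv.Perm V) • ((b : Equiv.Perm V)⁻¹ w)
              = (a : Equiv.Perm V)⁻¹ w
            simp [mul_smul]))) := by
    rintro ⟨O₁, hO₁⟩
    set v : V := Quotient.out O₁ with hv
    have hvO : Quotient.mk (orbitRel Γ₁ V) v = O₁ := Quotient.out_eq O₁
    have : Quotient.mk (orbitRel Γ₂ V) v = Quotient.mk (orbitRel Γ₂ V) w := by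
      rw [hwO, ← hO₁, ← hvO]; rfl
    obtain ⟨γ, hγ⟩ := (MulAction.orbitRel_apply (G := Γ₂)).mp (Quotient.exact this)
    refine ⟨QuotientGroup.mk γ⁻¹, Subtype.ext ?_⟩
    show Quotient.mk (orbitRel Γ₁ V) (((γ⁻¹ : Γ₂) : Equiv.Perm V)⁻¹ w) = O₁
    have h1 : ((γ⁻¹ : Γ₂) : Equiv.Perm V)⁻¹ w = (γ : Equiv.Perm V) w := by simp
    have h2 : (γ : Equiv.Perm V) w = v := hγ
    rw [h1, h2, hvO]
  refine ⟨Finite.of_surjective _ hsurj, ?_⟩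
  exact le_trans (Nat.card_le_card_of_surjective _ hsurj) (le_of_eq rfl)

/-- Growth of a finite-index subgroup. -/
lemma qg_le_mul (G : SimpleGraph V) (hconn : G.Connected)
    (hlf : ∀ v : V, (G.neighborSet v).Finite) {Γ₁ Γ₂ : Subgroup (Equiv.Perm V)}
    (h : Γ₁ ≤ Γ₂) (hfi : Γ₁.relIndex Γ₂ ≠ 0) (x₀ : V) (k : ℕ) :
    quotientGrowth G Γ₁ x₀ k ≤ Γ₁.relIndex Γ₂ * quotientGrowth G Γ₂ x₀ k := by
  haveI := growthSet_finite G hconn hlf Γ₁ x₀ k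
  haveI := growthSet_finite G hconn hlf Γ₂ x₀ k
  set π : Quotient (orbitRel Γ₁ V) → Quotient (orbitRel Γ₂ V) := orbMap h with hπ
  have hπmk : ∀ v : V, π (Quotient.mk (orbitRel Γ₁ V) v) = Quotient.mk (orbitRel Γ₂ V) v :=
    fun v => rfl
  set F : {O : Quotient (orbitRel Γ₁ V) //
      ∃ v : V, Quotient.mk (orbitRel Γ₁ V) v = O ∧ G.dist v x₀ ≤ k} →
      {O : Quotient (orbitRel Γ₂ V) //
      ∃ v : V, Quotient.mk (orbitRel Γ₂ V) v = O ∧ G.dist v x₀ ≤ k} :=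
    fun p => ⟨π p.1, by
      obtain ⟨v, hv, hd⟩ := p.2
      exact ⟨v, by rw [← hv]; exact hπmk v, hd⟩⟩ with hF
  apply card_le_mul_of_fiber F
  intro b
  have hinj : Function.Injective
      (fun q : {a // F a = b} =>
        (⟨q.1.1, congrArg Subtype.val q.2⟩ :
          {O₁ : Quotient (orbitRel Γ₁ V) // π O₁ = b.1})) := by
    intro p q hpq
    apply Subtype.ext; apply Subtype.ext
    exact (congrArg Subtype.val hpq :)
  haveI : Finite {O₁ : Quotient (orbitRel Γ₁ V) // π O₁ = b.1} :=
    (fiber_card_le G h hfi b.1).1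
  exact le_trans (Nat.card_le_card_of_injective _ hinj) (fiber_card_le G h hfi b.1).2

/-- Conjugating the group moves the basepoint. -/
lemma qg_conj (G : SimpleGraph V) (hconn : G.Connected)
    (Γ : Subgroup (Equiv.Perm V)) (g : Equiv.Perm V) (hg : g ∈ G.autGroup) (x₀ : V) (k : ℕ) :
    quotientGrowth G (Subgroup.map (MulAut.conj g).toMonoidHom Γ) x₀ k
      = quotientGrowth G Γ (g⁻¹ x₀) k := by
  set Γc := Subgroup.map (MulAut.conj g).toMonoidHom Γ with hΓc
  -- the equivalence of orbit spaces
  have key : ∀ a b : V, (orbitRel Γc V) a b ↔ (orbitRel Γ V) (g⁻¹ a) (g⁻¹ b) := by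
    intro a b
    rw [MulAction.orbitRel_apply, MulAction.orbitRel_apply]
    constructor
    · rintro ⟨⟨γ, hγ⟩, hact⟩
      obtain ⟨x, hx, hxγ⟩ := hγ
      refine ⟨⟨x, hx⟩, ?_⟩
      show x • (g⁻¹ b) = g⁻¹ a
      have : γ • b = a := hact
      have hγx : γ = g * x * g⁻¹ := by
        rw [← hxγ]; rfl
      have : (g * x * g⁻¹ : Equiv.Perm V) b = a := by rw [← hγx]; exact this
      show x (g⁻¹ b) = g⁻¹ a
      have := congrArg (fun y => g⁻¹ y) this
      simpa using this
    · rintro ⟨⟨x, hx⟩, hact⟩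
      refine ⟨⟨g * x * g⁻¹, ⟨x, hx, rfl⟩⟩, ?_⟩
      show (g * x * g⁻¹ : Equiv.Perm V) • b = a
      have : x (g⁻¹ b) = g⁻¹ a := hact
      show g (x (g⁻¹ b)) = a
      rw [this]; simp
  set e : Quotient (orbitRel Γc V) ≃ Quotient (orbitRel Γ V) :=
    Quotient.congr (g⁻¹ : Equiv.Perm V) (by
      intro a b
      exact key a b) with he
  have hemk : ∀ v : V, e (Quotient.mk (orbitRel Γc V) v)
      = Quotient.mk (orbitRel Γ V) (g⁻¹ v) := fun v => rfl
  apply Nat.card_congr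
  refine Equiv.subtypeEquiv e ?_
  intro O
  constructor
  · rintro ⟨v, hv, hd⟩
    refine ⟨g⁻¹ v, by rw [← hv]; exact hemk v, ?_⟩
    calc G.dist (g⁻¹ v) (g⁻¹ x₀) = G.dist v x₀ :=
          aut_dist G hconn g⁻¹ (G.autGroup.inv_mem hg) v x₀
      _ ≤ k := hd
  · rintro ⟨w, hw, hd⟩
    refine ⟨g w, ?_, ?_⟩
    · apply e.injective
      rw [hemk (g w), ← hw]
      congr 1
      simp
    · calc G.dist (g w) x₀ = G.dist (g w) (g (g⁻¹ x₀)) := by simp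
        _ = G.dist w (g⁻¹ x₀) := aut_dist G hconn g hg w (g⁻¹ x₀)
        _ ≤ k := hd

lemma GrowthLE.trans {f g h : ℕ → ℕ} (h1 : GrowthLE f g) (h2 : GrowthLE g h) :
    GrowthLE f h := by
  obtain ⟨a, b, hab⟩ := h1
  obtain ⟨a', b', hab'⟩ := h2
  refine ⟨a * a', b + b', fun k => ?_⟩
  calc f k ≤ a * g (k + b) := hab k
    _ ≤ a * (a' * h (k + b + b')) := Nat.mul_le_mul_left a (hab' (k + b))
    _ = a * a' * h (k + (b + b')) := by ring_nf
  -- might not close; fallback below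

lemma GrowthEquiv.trans {f g h : ℕ → ℕ} (h1 : GrowthEquiv f g) (h2 : GrowthEquiv g h) :
    GrowthEquiv f h :=
  ⟨h1.1.trans h2.1, h2.2.trans h1.2⟩

lemma growthLE_of_le_mul {f g : ℕ → ℕ} (c : ℕ) (h : ∀ k, f k ≤ c * g k) : GrowthLE f g :=
  ⟨c, 0, fun k => by simpa using h k⟩

end Aux

/-- If `X` is a locally finite tree and `Γ, Γ'` are commensurable
lattices in `Aut X`, then their quotient growth functions (number of orbits of
vertices meeting the ball of radius `k` about a fixed basepoint `x₀`) are
equivalent. -/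
theorem statement8 {V : Type u} (G : SimpleGraph V)
    (hconn : G.Connected) (hacyc : G.IsAcyclic)
    (hlf : ∀ v : V, (G.neighborSet v).Finite) (x₀ : V)
    (Γ Γ' : Subgroup (Equiv.Perm V))
    (hΓ : Γ ≤ G.autGroup) (hΓ' : Γ' ≤ G.autGroup)
    (hlat : IsGraphLattice Γ) (hlat' : IsGraphLattice Γ')
    (hcomm : CommensurableIn G.autGroup Γ Γ') :
    GrowthEquiv (fun k => quotientGrowth G Γ x₀ k)
      (fun k => quotientGrowth G Γ' x₀ k) := by
  obtain ⟨g, hg, hc⟩ := hcomm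
  set Γc := Subgroup.map (MulAut.conj g).toMonoidHom Γ with hΓc
  set Δ := Γc ⊓ Γ' with hΔdef
  have hΔc : Δ ≤ Γc := inf_le_left
  have hΔ' : Δ ≤ Γ' := inf_le_right
  have hfic : Δ.relIndex Γc ≠ 0 := by
    rw [hΔdef, Subgroup.inf_relIndex_left]; exact hc.2
  have hfi' : Δ.relIndex Γ' ≠ 0 := by
    rw [hΔdef, Subgroup.inf_relIndex_right]; exact hc.1
  have e1 : GrowthEquiv (fun k => quotientGrowth G Γ x₀ k)
      (fun k => quotientGrowth G Γc x₀ k) := by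
    constructor
    · refine ⟨1, G.dist x₀ (g⁻¹ x₀), fun k => ?_⟩
      show quotientGrowth G Γ x₀ k ≤ 1 * quotientGrowth G Γc x₀ (k + G.dist x₀ (g⁻¹ x₀))
      rw [one_mul, hΓc, qg_conj G hconn Γ g hg x₀ (k + G.dist x₀ (g⁻¹ x₀))]
      exact qg_basepoint G hconn hlf Γ (g⁻¹ x₀) x₀ k
    · refine ⟨1, G.dist (g⁻¹ x₀) x₀, fun k => ?_⟩
      show quotientGrowth G Γc x₀ k ≤ 1 * quotientGrowth G Γ x₀ (k + G.dist (g⁻¹ x₀) x₀)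
      rw [one_mul, hΓc, qg_conj G hconn Γ g hg x₀ k]
      exact qg_basepoint G hconn hlf Γ x₀ (g⁻¹ x₀) k
  have e2 : GrowthEquiv (fun k => quotientGrowth G Γc x₀ k)
      (fun k => quotientGrowth G Δ x₀ k) := by
    constructor
    · exact growthLE_of_le_mul 1 (fun k => by
        rw [one_mul]; exact qg_le_of_le G hconn hlf hΔc x₀ k)
    · exact growthLE_of_le_mul (Δ.relIndex Γc)
        (fun k => qg_le_mul G hconn hlf hΔc hfic x₀ k)
  have e3 : GrowthEquiv (fun k => quotientGrowth G Δ x₀ k)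
      (fun k => quotientGrowth G Γ' x₀ k) := by
    constructor
    · exact growthLE_of_le_mul (Δ.relIndex Γ')
        (fun k => qg_le_mul G hconn hlf hΔ' hfi' x₀ k)
    · exact growthLE_of_le_mul 1 (fun k => by
        rw [one_mul]; exact qg_le_of_le G hconn hlf hΔ' x₀ k)
  exact e1.trans (e2.trans e3)
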